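/- Let K be a field, C a coalgebra, P an algebra and right C-comodule with B = P^{co C}, and suppose P(B)^C is a cleft C-Galois extension with cleaving map γ. If {bᵢ} is a linear basis of B and {hⱼ} a linear basis of C, then the family {bᵢγ(hⱼ) ⊗_B γ(h_k)} is a linear basis of P ⊗_B P. -/

import Mathlib

open TensorProduct

open TensorProduct LinearMap

section Aux

variable {K C P : Type*} [Field K]
    [AddCommGroup C] [Module K C] [Coalgebra K C]
    [Ring P] [Algebra K P]

/-- The map `p ⊗ (d ⊗ e) ↦ (p * f d) ⊗ e`. -/
noncomputable def MM (K : Type*) {P : Type*} [Field K]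
    [Ring P] [Algebra K P]
    {D E : Type*} [AddCommGroup D] [Module K D] [AddCommGroup E] [Module K E]
    (f : D →ₗ[K] P) : P ⊗[K] (D ⊗[K] E) →ₗ[K] P ⊗[K] E :=
  (LinearMap.rTensor E (LinearMap.mul' K P)).comp
    (((TensorProduct.assoc K P P E).symm.toLinearMap).comp
      (LinearMap.lTensor P (LinearMap.rTensor E f)))

@[simp] lemma MM_tmul {D E : Type*} [AddCommGroup D] [Module K D]
    [AddCommGroup E] [Module K E]
    (f : D →ₗ[K] P) (p : P) (d : D) (e : E) :
    MM K f (p ⊗ₜ[K] (d ⊗ₜ[K] e)) = (p * f d) ⊗ₜ[K] e := by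
  simp [MM]

/-- The "convolution operator" `p ⊗ c ↦ p * f(c₍₁₎) ⊗ c₍₂₎`. -/
noncomputable def Tconv (K : Type*) {C P : Type*} [Field K]
    [AddCommGroup C] [Module K C] [Coalgebra K C] [Ring P] [Algebra K P]
    (f : C →ₗ[K] P) : P ⊗[K] C →ₗ[K] P ⊗[K] C :=
  (MM K f).comp (LinearMap.lTensor P (Coalgebra.comul (R := K)))

lemma Tconv_tmul (f : C →ₗ[K] P) (p : P) (c : C) :
    Tconv K f (p ⊗ₜ[K] c) = MM K f (p ⊗ₜ[K] (Coalgebra.comul (R := K) c)) := by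
  rfl

lemma claimA (g : C →ₗ[K] P) :
    (LinearMap.lTensor P (Coalgebra.comul (R := K))).comp (MM K (E := C) g) =
      (MM K (E := C ⊗[K] C) g).comp
        (LinearMap.lTensor P (LinearMap.lTensor C (Coalgebra.comul (R := K)))) := by
  ext p c c'
  simp [MM]

lemma claimB (f g : C →ₗ[K] P) :
    (MM K (E := C) f).comp ((MM K (E := C ⊗[K] C) g).comp
        (LinearMap.lTensor P (TensorProduct.assoc K C C C).toLinearMap)) =
      MM K (D := C ⊗[K] C) ((LinearMap.mul' K P).comp (TensorProduct.map g f)) := by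
  ext p x y z
  simp [MM, mul_assoc]

lemma claimC (h : C ⊗[K] C →ₗ[K] P) :
    (MM K (D := C ⊗[K] C) (E := C) h).comp
        (LinearMap.lTensor P (LinearMap.rTensor C (Coalgebra.comul (R := K)))) =
      MM K (E := C) (h.comp (Coalgebra.comul (R := K))) := by
  ext p c z
  simp [MM]

lemma Tconv_comp (f g : C →ₗ[K] P) :
    (Tconv K f).comp (Tconv K g) =
      Tconv K (((LinearMap.mul' K P).comp (TensorProduct.map g f)).comp
        (Coalgebra.comul (R := K))) := by
  apply TensorProduct.ext'
  intro p c
  have hA := LinearMap.congr_fun (claimA (K := K) (C := C) (P := P) g)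
    (p ⊗ₜ[K] (Coalgebra.comul (R := K) c))
  have hB := LinearMap.congr_fun (claimB f g)
    (p ⊗ₜ[K] (LinearMap.rTensor C (Coalgebra.comul (R := K)) (Coalgebra.comul (R := K) c)))
  have hC := LinearMap.congr_fun (claimC ((LinearMap.mul' K P).comp (TensorProduct.map g f)))
    (p ⊗ₜ[K] (Coalgebra.comul (R := K) c))
  simp only [LinearMap.coe_comp, Function.comp_apply, LinearMap.lTensor_tmul] at hA hB hC ⊢
  rw [Tconv_tmul, Tconv_tmul]
  rw [show Tconv K f (MM K g (p ⊗ₜ[K] (Coalgebra.comul (R := K) c))) =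
      MM K f ((LinearMap.lTensor P (Coalgebra.comul (R := K)))
        (MM K g (p ⊗ₜ[K] (Coalgebra.comul (R := K) c)))) from rfl]
  rw [hA, ← Coalgebra.coassoc_apply]
  rw [show (TensorProduct.assoc K C C C)
        ((Coalgebra.comul (R := K)).rTensor C (Coalgebra.comul (R := K) c)) =
      (TensorProduct.assoc K C C C).toLinearMap
        ((Coalgebra.comul (R := K)).rTensor C (Coalgebra.comul (R := K) c)) from rfl]
  rw [hB, hC]

lemma Tconv_counit :
    Tconv K ((Algebra.linearMap K P).comp (Coalgebra.counit (R := K) (A := C))) =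
      LinearMap.id := by
  have claimD : MM K (E := C)
      ((Algebra.linearMap K P).comp (Coalgebra.counit (R := K) (A := C))) =
      LinearMap.lTensor P ((TensorProduct.lid K C).toLinearMap.comp
        (LinearMap.rTensor C (Coalgebra.counit (R := K)))) := by
    ext p c z
    simp only [MM, AlgebraTensorModule.curry_apply, curry_apply, coe_comp, coe_restrictScalars,
      Function.comp_apply, lTensor_tmul, rTensor_tmul, Algebra.linearMap_apply,
      LinearEquiv.coe_coe, TensorProduct.assoc_symm_tmul, mul'_apply, TensorProduct.lid_tmul]
    rw [show p * algebraMap K P (Coalgebra.counit c) =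
      Coalgebra.counit (R := K) c • p by rw [← Algebra.commutes, Algebra.smul_def]]
    rw [TensorProduct.smul_tmul]
  unfold Tconv
  rw [claimD, ← LinearMap.lTensor_comp, LinearMap.comp_assoc,
    Coalgebra.rTensor_counit_comp_comul]
  have : (TensorProduct.lid K C).toLinearMap.comp (TensorProduct.mk K K C 1) =
      LinearMap.id := by ext c; simp
  rw [this, LinearMap.lTensor_id]

end Aux

section Aux2

variable {K C P : Type*} [Field K]
    [AddCommGroup C] [Module K C] [Coalgebra K C]
    [Ring P] [Algebra K P]

lemma aux_mulLeft (b : P) (t : P ⊗[K] C) :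
    LinearMap.rTensor C (LinearMap.mulLeft K b) t =
      LinearMap.rTensor C (LinearMap.mul' K P)
        ((TensorProduct.assoc K P P C).symm (b ⊗ₜ[K] t)) := by
  induction t using TensorProduct.induction_on with
  | zero => simp
  | tmul q c => simp
  | add x y hx hy => simp [tmul_add, map_add, hx, hy]

lemma claimE (γ γ' : C →ₗ[K] P) :
    (LinearMap.mul' K P).comp ((TensorProduct.map (LinearMap.mul' K P) γ).comp
      ((LinearMap.rTensor C (LinearMap.lTensor P γ')).comp
        (TensorProduct.assoc K P C C).symm.toLinearMap)) =
    (LinearMap.mul' K P).comp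
      (LinearMap.lTensor P ((LinearMap.mul' K P).comp (TensorProduct.map γ' γ))) := by
  ext p c c'
  simp [mul_assoc]

lemma claimF : (LinearMap.mul' K P).comp (LinearMap.lTensor P (Algebra.linearMap K P)) =
    (TensorProduct.rid K P).toLinearMap := by
  ext p
  simp only [AlgebraTensorModule.curry_apply, curry_apply, coe_comp, coe_restrictScalars,
    Function.comp_apply, lTensor_tmul, Algebra.linearMap_apply, mul'_apply,
    LinearEquiv.coe_coe, TensorProduct.rid_tmul, one_smul]
  rw [map_one, mul_one]

end Aux2

lemma sumExtend_inl {K V ι : Type*} [Field K] [AddCommGroup V] [Module K V]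
    {v : ι → V} (hv : LinearIndependent K v) (i : ι) :
    Module.Basis.sumExtend hv (Sum.inl i) = v i := by
  simp only [Module.Basis.sumExtend, Module.Basis.reindex_apply, Equiv.symm_symm, Module.Basis.extend_apply_self]
  rfl

/-- For a cleft `C`-Galois extension `B = P^{co C} ⊆ P` over a field, if `{bᵢ}`
is a basis of `B` and `{hⱼ}` a basis of `C`, then `{bᵢ γ(hⱼ) ⊗_B γ(h_k)}` is a
basis of `P ⊗_B P` (realized as the quotient of `P ⊗ P` by the `B`-balancing
relations).  Coinvariance of `p` means `ρ(p) = p·ρ(1)`. -/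
theorem cleft_basis_of_tensor_over_B
    {K C P ιB ιC : Type*} [Field K]
    [AddCommGroup C] [Module K C] [Coalgebra K C]
    [Ring P] [Algebra K P]
    (ρ : P →ₗ[K] P ⊗[K] C)
    (hcoassoc : ∀ p : P,
      (TensorProduct.assoc K P C C) ((LinearMap.rTensor C ρ) (ρ p)) =
        (LinearMap.lTensor P (Coalgebra.comul (R := K))) (ρ p))
    (hcounit : ∀ p : P,
      (TensorProduct.rid K P)
          ((LinearMap.lTensor P (Coalgebra.counit (R := K))) (ρ p)) = p)
    (γ γ' : C →ₗ[K] P)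
    (hcolin : ∀ c : C,
      ρ (γ c) = (LinearMap.rTensor C γ) (Coalgebra.comul (R := K) c))
    (hconv₁ : ∀ c : C,
      (LinearMap.mul' K P) ((TensorProduct.map γ γ') (Coalgebra.comul (R := K) c)) =
        algebraMap K P (Coalgebra.counit (R := K) c))
    (hconv₂ : ∀ c : C,
      (LinearMap.mul' K P) ((TensorProduct.map γ' γ) (Coalgebra.comul (R := K) c)) =
        algebraMap K P (Coalgebra.counit (R := K) c))
    -- `p₍₀₎ γ'(p₍₁₎)` lies in the coinvariants `B = {p | ρ(p) = p·ρ(1)}`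
    (hB : ∀ p : P,
      ρ (((LinearMap.mul' K P).comp ((LinearMap.lTensor P γ').comp ρ)) p) =
        (LinearMap.rTensor C
          (LinearMap.mulLeft K
            (((LinearMap.mul' K P).comp ((LinearMap.lTensor P γ').comp ρ)) p)))
          (ρ 1))
    -- the submodule of `B`-balancing relations defining `P ⊗_B P`
    (relSub : Submodule K (P ⊗[K] P))
    (hrel : relSub = Submodule.span K
      {t : P ⊗[K] P | ∃ (p p' b : P),
        ρ b = (LinearMap.rTensor C (LinearMap.mulLeft K b)) (ρ 1) ∧
        t = (p * b) ⊗ₜ[K] p' - p ⊗ₜ[K] (b * p')})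
    -- the canonical map `P ⊗_B P → P ⊗ C` is well defined and bijective
    (hker : relSub ≤ LinearMap.ker
      ((LinearMap.rTensor C (LinearMap.mul' K P)).comp
        (((TensorProduct.assoc K P P C).symm.toLinearMap).comp
          (LinearMap.lTensor P ρ))))
    (hcan : Function.Bijective (Submodule.liftQ relSub
      ((LinearMap.rTensor C (LinearMap.mul' K P)).comp
        (((TensorProduct.assoc K P P C).symm.toLinearMap).comp
          (LinearMap.lTensor P ρ))) hker))
    -- bases of `B` and of `C`
    (bB : Module.Basis ιB K ↥(LinearMap.ker (ρ -
      ((LinearMap.rTensor C (LinearMap.mul' K P)).comp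
        (((TensorProduct.assoc K P P C).symm.toLinearMap).comp
          ((TensorProduct.mk K P (P ⊗[K] C)).flip (ρ 1)))))))
    (bC : Module.Basis ιC K C) :
    LinearIndependent K (fun x : ιB × ιC × ιC =>
      (Submodule.Quotient.mk
        (((bB x.1 : P) * γ (bC x.2.1)) ⊗ₜ[K] γ (bC x.2.2)) :
        (P ⊗[K] P) ⧸ relSub)) ∧
    Submodule.span K (Set.range (fun x : ιB × ιC × ιC =>
      (Submodule.Quotient.mk
        (((bB x.1 : P) * γ (bC x.2.1)) ⊗ₜ[K] γ (bC x.2.2)) :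
        (P ⊗[K] P) ⧸ relSub))) = ⊤ := by
  classical
  revert bB
  set Bsub : Submodule K P := LinearMap.ker (ρ -
      ((LinearMap.rTensor C (LinearMap.mul' K P)).comp
        (((TensorProduct.assoc K P P C).symm.toLinearMap).comp
          ((TensorProduct.mk K P (P ⊗[K] C)).flip (ρ 1))))) with hBsub
  intro bB
  set F : P ⊗[K] P →ₗ[K] P ⊗[K] C :=
      ((LinearMap.rTensor C (LinearMap.mul' K P)).comp
        (((TensorProduct.assoc K P P C).symm.toLinearMap).comp
          (LinearMap.lTensor P ρ))) with hFdef
  set canQ : ((P ⊗[K] P) ⧸ relSub) →ₗ[K] P ⊗[K] C := Submodule.liftQ relSub F hker with hcanQ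
  -- membership in the coinvariants
  have memB_iff : ∀ b : P, b ∈ Bsub ↔
      ρ b = LinearMap.rTensor C (LinearMap.mulLeft K b) (ρ 1) := by
    intro b
    rw [hBsub, LinearMap.mem_ker, LinearMap.sub_apply, sub_eq_zero]
    constructor <;> intro h <;>
      [skip; skip] <;>
      · rw [h]
        simp only [LinearMap.coe_comp, Function.comp_apply, LinearMap.flip_apply,
          TensorProduct.mk_apply, LinearEquiv.coe_coe]
        rw [aux_mulLeft]
  -- convolution identities as linear maps
  have hγε₁ : ((LinearMap.mul' K P).comp (TensorProduct.map γ γ')).comp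
      (Coalgebra.comul (R := K)) =
      (Algebra.linearMap K P).comp (Coalgebra.counit (R := K)) :=
    LinearMap.ext fun c => by simpa using hconv₁ c
  have hγε₂ : ((LinearMap.mul' K P).comp (TensorProduct.map γ' γ)).comp
      (Coalgebra.comul (R := K)) =
      (Algebra.linearMap K P).comp (Coalgebra.counit (R := K)) :=
    LinearMap.ext fun c => by simpa using hconv₂ c
  have hTT1 : (Tconv K γ').comp (Tconv K γ) = LinearMap.id := by
    rw [Tconv_comp, hγε₁, Tconv_counit]
  have hTT2 : (Tconv K γ).comp (Tconv K γ') = LinearMap.id := by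
    rw [Tconv_comp, hγε₂, Tconv_counit]
  -- the canonical map evaluated on `p ⊗ γ c`
  have hcanγ : ∀ (p : P) (c : C),
      canQ (Submodule.Quotient.mk (p ⊗ₜ[K] γ c)) = Tconv K γ (p ⊗ₜ[K] c) := by
    intro p c
    rw [hcanQ, Submodule.liftQ_apply, Tconv_tmul]
    simp only [hFdef, MM, LinearMap.coe_comp, Function.comp_apply,
      LinearMap.lTensor_tmul, LinearEquiv.coe_coe]
    rw [hcolin]
  -- balancing in the quotient
  have hquot : ∀ b ∈ Bsub, ∀ p' : P,
      (Submodule.Quotient.mk (1 ⊗ₜ[K] (b * p')) : (P ⊗[K] P) ⧸ relSub) =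
        Submodule.Quotient.mk (b ⊗ₜ[K] p') := by
    intro b hb p'
    rw [Submodule.Quotient.eq]
    rw [hrel]
    have : (1 ⊗ₜ[K] (b * p') - b ⊗ₜ[K] p') =
        -(((1 : P) * b) ⊗ₜ[K] p' - 1 ⊗ₜ[K] (b * p')) := by
      rw [one_mul, neg_sub]
    rw [this]
    exact neg_mem (Submodule.subset_span ⟨1, p', b, (memB_iff b).mp hb, rfl⟩)
  -- the retraction
  have hT : ∀ b ∈ Bsub, ∀ c : C,
      Tconv K γ' (canQ (Submodule.Quotient.mk (1 ⊗ₜ[K] (b * γ c)))) = b ⊗ₜ[K] c := by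
    intro b hb c
    rw [hquot b hb (γ c), hcanγ]
    exact LinearMap.congr_fun hTT1 (b ⊗ₜ[K] c)
  -- `Bsub` is spanned by the basis
  have Bspan : Bsub = Submodule.span K (Set.range (fun i => (bB i : P))) := by
    conv_lhs => rw [← Submodule.map_subtype_top Bsub, ← bB.span_eq]
    rw [Submodule.map_span]
    congr 1
    rw [← Set.range_comp]
    rfl
  -- the identity `p = Σ (p₍₀₎ γ'(p₍₁₎)) γ(p₍₂₎)`
  have hGid : ∀ p : P, (LinearMap.mul' K P)
      (TensorProduct.map ((LinearMap.mul' K P).comp ((LinearMap.lTensor P γ').comp ρ)) γ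
        (ρ p)) = p := by
    intro p
    have hmap : TensorProduct.map
        ((LinearMap.mul' K P).comp ((LinearMap.lTensor P γ').comp ρ)) γ =
        (TensorProduct.map (LinearMap.mul' K P) γ).comp
          ((LinearMap.rTensor C (LinearMap.lTensor P γ')).comp (LinearMap.rTensor C ρ)) := by
      rw [← LinearMap.rTensor_comp]
      rw [show LinearMap.rTensor C ((LinearMap.lTensor P γ').comp ρ) =
        TensorProduct.map ((LinearMap.lTensor P γ').comp ρ) LinearMap.id from rfl]
      rw [← TensorProduct.map_comp, LinearMap.comp_id]
    rw [hmap]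
    simp only [LinearMap.coe_comp, Function.comp_apply]
    have hρ : LinearMap.rTensor C ρ (ρ p) =
        (TensorProduct.assoc K P C C).symm
          (LinearMap.lTensor P (Coalgebra.comul (R := K)) (ρ p)) := by
      rw [← hcoassoc p, LinearEquiv.symm_apply_apply]
    rw [hρ]
    have hE := LinearMap.congr_fun (claimE (K := K) (C := C) (P := P) γ γ')
      (LinearMap.lTensor P (Coalgebra.comul (R := K)) (ρ p))
    simp only [LinearMap.coe_comp, Function.comp_apply, LinearEquiv.coe_coe] at hE
    rw [hE]
    have h2 := LinearMap.congr_fun (LinearMap.lTensor_comp P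
      ((LinearMap.mul' K P).comp (TensorProduct.map γ' γ)) (Coalgebra.comul (R := K))) (ρ p)
    simp only [LinearMap.coe_comp, Function.comp_apply] at h2
    rw [← h2, hγε₂]
    have h3 := LinearMap.congr_fun (LinearMap.lTensor_comp P
      (Algebra.linearMap K P) (Coalgebra.counit (R := K))) (ρ p)
    simp only [LinearMap.coe_comp, Function.comp_apply] at h3
    rw [h3]
    have h4 := LinearMap.congr_fun (claimF (K := K) (P := P))
      ((LinearMap.lTensor P (Coalgebra.counit (R := K))) (ρ p))
    simp only [LinearMap.coe_comp, Function.comp_apply, LinearEquiv.coe_coe] at h4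
    rw [h4]
    exact hcounit p
  -- the family `bᵢ γ(hⱼ)`
  set u : ιB × ιC → P := fun ij => (bB ij.1 : P) * γ (bC ij.2) with hu
  -- it spans `P`
  have key : ∀ b ∈ Bsub, ∀ c : C, b * γ c ∈ Submodule.span K (Set.range u) := by
    intro b hb
    rw [Bspan] at hb
    induction hb using Submodule.span_induction with
    | mem x hx =>
      obtain ⟨i, rfl⟩ := hx
      intro c
      have hc : c ∈ Submodule.span K (Set.range bC) := by rw [bC.span_eq]; trivial
      induction hc using Submodule.span_induction with
      | mem y hy =>
        obtain ⟨j, rfl⟩ := hy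
        exact Submodule.subset_span ⟨(i, j), rfl⟩
      | zero => simp
      | add y z hy hz ihy ihz => rw [map_add, mul_add]; exact add_mem ihy ihz
      | smul a y hy ih => rw [map_smul, mul_smul_comm]; exact Submodule.smul_mem _ _ ih
    | zero => intro c; simp
    | add x y hx hy ihx ihy => intro c; rw [add_mul]; exact add_mem (ihx c) (ihy c)
    | smul a x hx ih => intro c; rw [smul_mul_assoc]; exact Submodule.smul_mem _ _ (ih c)
  have hspan_u : ⊤ ≤ Submodule.span K (Set.range u) := by
    intro p _
    have hall : ∀ t : P ⊗[K] C, (LinearMap.mul' K P)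
        (TensorProduct.map ((LinearMap.mul' K P).comp ((LinearMap.lTensor P γ').comp ρ)) γ t)
        ∈ Submodule.span K (Set.range u) := by
      intro t
      induction t using TensorProduct.induction_on with
      | zero => simp
      | tmul q c =>
        rw [TensorProduct.map_tmul, LinearMap.mul'_apply]
        exact key _ ((memB_iff _).mpr (hB q)) c
      | add x y hx hy => rw [map_add, map_add]; exact add_mem hx hy
    have h := hall (ρ p)
    rwa [hGid p] at h
  -- linear independence of `u`
  have hbli : LinearIndependent K (fun i => (bB i : P)) :=
    bB.linearIndependent.map' Bsub.subtype (Submodule.ker_subtype _)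
  have hwli : LinearIndependent K (fun ij : ιB × ιC => (bB ij.1 : P) ⊗ₜ[K] bC ij.2) := by
    have heq : (fun ij : ιB × ιC => (bB ij.1 : P) ⊗ₜ[K] bC ij.2) =
        (⇑((Module.Basis.sumExtend hbli).tensorProduct bC)) ∘
          (fun ij : ιB × ιC => ((Sum.inl ij.1 : _ ⊕ _), ij.2)) := by
      funext ij
      simp only [Function.comp_apply, Module.Basis.tensorProduct_apply, sumExtend_inl hbli]
    rw [heq]
    exact (((Module.Basis.sumExtend hbli).tensorProduct bC).linearIndependent).comp _
      (fun a b h => by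
        simp only [Prod.mk.injEq, Sum.inl.injEq] at h
        exact Prod.ext h.1 h.2)
  have huli : LinearIndependent K u := by
    apply LinearIndependent.of_comp ((Tconv K γ').comp (canQ.comp
      (relSub.mkQ.comp ((TensorProduct.mk K P P) 1))))
    have heq : (⇑((Tconv K γ').comp (canQ.comp
        (relSub.mkQ.comp ((TensorProduct.mk K P P) 1)))) ∘ u)
        = fun ij : ιB × ιC => (bB ij.1 : P) ⊗ₜ[K] bC ij.2 := by
      funext ij
      simp only [Function.comp_apply, LinearMap.coe_comp, TensorProduct.mk_apply,
        Submodule.mkQ_apply, hu]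
      exact hT _ (bB ij.1).2 (bC ij.2)
    rw [heq]
    exact hwli
  let basisP : Module.Basis (ιB × ιC) K P := Module.Basis.mk huli hspan_u
  let basisPC : Module.Basis ((ιB × ιC) × ιC) K (P ⊗[K] C) := basisP.tensorProduct bC
  let canQe : ((P ⊗[K] P) ⧸ relSub) ≃ₗ[K] P ⊗[K] C := LinearEquiv.ofBijective canQ hcan
  let Phe : (P ⊗[K] C) ≃ₗ[K] P ⊗[K] C :=
    LinearEquiv.ofLinear (Tconv K γ') (Tconv K γ) hTT1 hTT2
  let Efin : ((P ⊗[K] P) ⧸ relSub) ≃ₗ[K] P ⊗[K] C := canQe.trans Phe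
  have hEF : ∀ x : ιB × ιC × ιC, Efin (Submodule.Quotient.mk
      (((bB x.1 : P) * γ (bC x.2.1)) ⊗ₜ[K] γ (bC x.2.2))) =
      basisPC ((x.1, x.2.1), x.2.2) := by
    intro x
    have h1 : Efin (Submodule.Quotient.mk
        (((bB x.1 : P) * γ (bC x.2.1)) ⊗ₜ[K] γ (bC x.2.2))) =
        Tconv K γ' (canQ (Submodule.Quotient.mk
          (((bB x.1 : P) * γ (bC x.2.1)) ⊗ₜ[K] γ (bC x.2.2)))) := rfl
    rw [h1, hcanγ ((bB x.1 : P) * γ (bC x.2.1)) (bC x.2.2)]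
    have h2 := LinearMap.congr_fun hTT1 (((bB x.1 : P) * γ (bC x.2.1)) ⊗ₜ[K] bC x.2.2)
    simp only [LinearMap.coe_comp, Function.comp_apply, LinearMap.id_coe, id_eq] at h2
    rw [h2]
    rw [show basisPC ((x.1, x.2.1), x.2.2) = basisP (x.1, x.2.1) ⊗ₜ[K] bC x.2.2 from
      Module.Basis.tensorProduct_apply basisP bC _ _]
    rw [show basisP (x.1, x.2.1) = u (x.1, x.2.1) from Module.Basis.mk_apply huli hspan_u _]
  let eidx : ((ιB × ιC) × ιC) ≃ (ιB × ιC × ιC) := Equiv.prodAssoc ιB ιC ιC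
  let basisQ : Module.Basis (ιB × ιC × ιC) K ((P ⊗[K] P) ⧸ relSub) :=
    (basisPC.map Efin.symm).reindex eidx
  have hfam : (fun x : ιB × ιC × ιC => (Submodule.Quotient.mk
      (((bB x.1 : P) * γ (bC x.2.1)) ⊗ₜ[K] γ (bC x.2.2)) :
        (P ⊗[K] P) ⧸ relSub)) = ⇑basisQ := by
    funext x
    apply Efin.injective
    rw [hEF x]
    simp only [basisQ, Module.Basis.reindex_apply, Module.Basis.map_apply, LinearEquiv.apply_symm_apply]
    rfl
  exact ⟨hfam ▸ basisQ.linearIndependent, by rw [hfam]; exact basisQ.span_eq⟩
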